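/- There exists an absolute constant C > 0 such that the following holds (Chang's lemma). Let N ≥ 1, let A ⊆ ℤ/Nℤ be nonempty of density α = |A|/N with α ≤ 1/2, and let δ > 0. Then dim Spec_δ(A) ≤ C·(log(1/α))^C/δ². -/

import Mathlib

open scoped Classical

/-- The Fourier coefficient `1̂_A(ξ) = 𝔼_{x ∈ ℤ/Nℤ} 1_A(x) e(-ξx/N)` of the indicator of
`A ⊆ ℤ/Nℤ` at the frequency `ξ`. -/
noncomputable def indFourierCoeff {N : ℕ} (A : Finset (ZMod N)) (ξ : ZMod N) : ℂ :=
  (N : ℂ)⁻¹ * ∑ x ∈ A, Complex.exp (-(2 * Real.pi * Complex.I * (ξ.val : ℂ) * (x.val : ℂ)) / N)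

/-- The `δ`-large spectrum `Spec_δ(A) = {ξ : |1̂_A(ξ)| ≥ δα}` of a set `A ⊆ ℤ/Nℤ` of
density `α`. -/
noncomputable def largeSpec {N : ℕ} [NeZero N] (A : Finset (ZMod N)) (δ : ℝ) :
    Finset (ZMod N) :=
  Finset.univ.filter fun ξ => δ * ((A.card : ℝ) / N) ≤ ‖indFourierCoeff A ξ‖

/-- A finset `S` of an abelian group is dissociated if the only way to write `0` as
`∑_{s ∈ S} ε_s s` with `ε_s ∈ {-1,0,1}` is with all `ε_s = 0`. -/
def IsDissociated {G : Type*} [AddCommGroup G] (S : Finset G) : Prop :=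
  ∀ ε : G → ℤ, (∀ s ∈ S, ε s = -1 ∨ ε s = 0 ∨ ε s = 1) →
    (∑ s ∈ S, ε s • s) = 0 → ∀ s ∈ S, ε s = 0

/-- The (additive) dimension of a finset: the size of its largest dissociated subset. -/
noncomputable def addDim {G : Type*} [AddCommGroup G] (S : Finset G) : ℕ :=
  (S.powerset.filter IsDissociated).sup Finset.card

namespace ChangAux

variable {N : ℕ} [NeZero N]


variable {N : ℕ} [NeZero N]

noncomputable abbrev e : AddChar (ZMod N) ℂ := ZMod.stdAddChar

lemma abs_e (a : ZMod N) : ‖e a‖ = 1 := by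
  rw [ZMod.stdAddChar_apply]
  exact Circle.norm_coe _

lemma e_ne_zero (a : ZMod N) : e a ≠ 0 := by
  intro h
  have := abs_e (N := N) a
  rw [h] at this
  simp at this

lemma conj_e (a : ZMod N) : (starRingEnd ℂ) (e a) = e (-a) := by
  have h1 : e a * (starRingEnd ℂ) (e a) = 1 := by
    rw [Complex.mul_conj]
    norm_cast
    rw [← Complex.sq_norm, abs_e]
    norm_num
  have h2 : e a * e (-a) = 1 := by
    rw [← AddChar.map_add_eq_mul]
    simp
  exact mul_left_cancel₀ (e_ne_zero a) (h1.trans h2.symm)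

lemma sum_e (b : ZMod N) : ∑ x : ZMod N, e (x * b) = if b = 0 then (N : ℂ) else 0 := by
  have := AddChar.sum_mulShift b (ZMod.isPrimitive_stdAddChar N)
  rw [ZMod.card] at this
  rw [this]
  split <;> simp


/-- The unnormalized Fourier sum. -/
noncomputable def S (A : Finset (ZMod N)) (ξ : ZMod N) : ℂ := ∑ x ∈ A, e (ξ * x)

lemma e_eq (ξ x : ZMod N) :
    Complex.exp (-(2 * Real.pi * Complex.I * (ξ.val : ℂ) * (x.val : ℂ)) / N)
      = e (-(ξ * x)) := by
  have h := ZMod.stdAddChar_coe (N := N) (-(ξ.val * x.val : ℤ))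
  have h2 : (((-(ξ.val * x.val : ℤ) : ℤ) : ZMod N)) = -(ξ * x) := by
    push_cast
    rw [ZMod.natCast_val, ZMod.natCast_val, ZMod.cast_id, ZMod.cast_id]
  rw [h2] at h
  rw [h]
  push_cast
  ring_nf

lemma indFourierCoeff_eq (A : Finset (ZMod N)) (ξ : ZMod N) :
    indFourierCoeff A ξ = (N : ℂ)⁻¹ * (starRingEnd ℂ) (S A ξ) := by
  rw [indFourierCoeff, S, map_sum]
  congr 1
  refine Finset.sum_congr rfl fun x hx => ?_
  rw [e_eq, conj_e]

lemma abs_indFourierCoeff (A : Finset (ZMod N)) (ξ : ZMod N) :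
    ‖indFourierCoeff A ξ‖ = (N : ℝ)⁻¹ * ‖S A ξ‖ := by
  rw [indFourierCoeff_eq, norm_mul, norm_inv, Complex.norm_natCast, Complex.norm_conj]

lemma S_zero (A : Finset (ZMod N)) : S A 0 = A.card := by
  simp [S]

lemma parseval (A : Finset (ZMod N)) :
    ∑ ξ : ZMod N, Complex.normSq (S A ξ) = (N : ℝ) * A.card := by
  have key : ∑ ξ : ZMod N, (S A ξ * (starRingEnd ℂ) (S A ξ)) = (N : ℂ) * A.card := by
    have expand : ∀ ξ : ZMod N, S A ξ * (starRingEnd ℂ) (S A ξ)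
        = ∑ x ∈ A, ∑ y ∈ A, e (ξ * (x - y)) := by
      intro ξ
      rw [S, map_sum, Finset.sum_mul_sum]
      refine Finset.sum_congr rfl fun x hx => Finset.sum_congr rfl fun y hy => ?_
      rw [conj_e, ← AddChar.map_add_eq_mul]
      ring_nf
    calc ∑ ξ : ZMod N, (S A ξ * (starRingEnd ℂ) (S A ξ))
        = ∑ ξ : ZMod N, ∑ x ∈ A, ∑ y ∈ A, e (ξ * (x - y)) := by
          exact Finset.sum_congr rfl fun ξ _ => expand ξ
      _ = ∑ x ∈ A, ∑ y ∈ A, ∑ ξ : ZMod N, e (ξ * (x - y)) := by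
          rw [Finset.sum_comm]
          refine Finset.sum_congr rfl fun x hx => Finset.sum_comm
      _ = ∑ x ∈ A, ∑ y ∈ A, (if x - y = 0 then (N:ℂ) else 0) := by
          refine Finset.sum_congr rfl fun x hx => Finset.sum_congr rfl fun y hy => sum_e _
      _ = ∑ x ∈ A, ∑ y ∈ A, (if y = x then (N:ℂ) else 0) := by
          refine Finset.sum_congr rfl fun x hx => Finset.sum_congr rfl fun y hy => ?_
          congr 1
          simp [sub_eq_zero, eq_comm]
      _ = ∑ x ∈ A, (N : ℂ) := by
          refine Finset.sum_congr rfl fun x hx => ?_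
          rw [Finset.sum_ite_eq' A x (fun _ => (N:ℂ))]
          simp [hx]
      _ = (N : ℂ) * A.card := by
          rw [Finset.sum_const]
          push_cast
          ring
  have : ((∑ ξ : ZMod N, Complex.normSq (S A ξ) : ℝ) : ℂ) = (((N : ℝ) * A.card : ℝ) : ℂ) := by
    push_cast
    rw [← key]
    refine Finset.sum_congr rfl fun ξ _ => ?_
    rw [Complex.mul_conj]
  exact_mod_cast this


lemma isDissociated_subset {Λ Λ' : Finset (ZMod N)} (hsub : Λ ⊆ Λ')
    (h : IsDissociated Λ') : IsDissociated Λ := by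
  intro ε hε hsum s hs
  have h0 : ∀ s ∈ Λ', (fun s => if s ∈ Λ then ε s else 0) s = -1 ∨
      (fun s => if s ∈ Λ then ε s else 0) s = 0 ∨ (fun s => if s ∈ Λ then ε s else 0) s = 1 := by
    intro s hs'
    by_cases hmem : s ∈ Λ
    · simpa [hmem] using hε s hmem
    · simp [hmem]
  have h1 : (∑ s ∈ Λ', (if s ∈ Λ then ε s else 0) • s) = 0 := by
    rw [← Finset.sum_subset hsub (fun x _ hx => by simp [hx])]
    rw [← hsum]
    exact Finset.sum_congr rfl fun x hx => by simp [hx]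
  have := h _ h0 h1 s (hsub hs)
  simpa [hs] using this

lemma zero_not_mem_dissociated {Λ : Finset (ZMod N)} (h : IsDissociated Λ) : 0 ∉ Λ := by
  intro h0
  have := h (fun s => if s = 0 then 1 else 0) ?_ ?_ 0 h0
  · simp at this
  · intro s hs
    by_cases hs0 : s = 0 <;> simp [hs0]
  · rw [Finset.sum_eq_single 0]
    · simp
    · intro b _ hb; simp [hb]
    · intro h'; exact absurd h0 h'

/-- Shifted orthogonality: if `c` cannot be cancelled by a ±1/0 combination of `Λ`,
the twisted sum of the Riesz product vanishes. -/
lemma key0 (u v : ZMod N → ℂ) :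
    ∀ (Λ : Finset (ZMod N)) (c : ZMod N),
    (∀ ε : ZMod N → ℤ, (∀ s ∈ Λ, ε s = -1 ∨ ε s = 0 ∨ ε s = 1) →
      c + ∑ s ∈ Λ, ε s • s ≠ 0) →
    ∑ x : ZMod N, e (c * x) * ∏ ξ ∈ Λ, (1 + u ξ * e (ξ * x) + v ξ * e (-ξ * x)) = 0 := by
  intro Λ
  induction Λ using Finset.induction_on with
  | empty =>
      intro c hc
      have hc0 : c ≠ 0 := by
        have := hc (fun _ => 0) (fun s hs => by simp) 
        simpa using this
      simpa [hc0, mul_comm] using sum_e (N := N) c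
  | @insert a Λ ha ih =>
      intro c hc
      have step : ∀ x : ZMod N,
          e (c * x) * ∏ ξ ∈ insert a Λ, (1 + u ξ * e (ξ * x) + v ξ * e (-ξ * x))
          = e (c * x) * ∏ ξ ∈ Λ, (1 + u ξ * e (ξ * x) + v ξ * e (-ξ * x))
            + u a * (e ((c + a) * x) * ∏ ξ ∈ Λ, (1 + u ξ * e (ξ * x) + v ξ * e (-ξ * x)))
            + v a * (e ((c - a) * x) * ∏ ξ ∈ Λ, (1 + u ξ * e (ξ * x) + v ξ * e (-ξ * x))) := by
        intro x
        rw [Finset.prod_insert ha]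
        have e1 : e ((c + a) * x) = e (c * x) * e (a * x) := by
          rw [← AddChar.map_add_eq_mul]; ring_nf
        have e2 : e ((c - a) * x) = e (c * x) * e (-a * x) := by
          rw [← AddChar.map_add_eq_mul]; ring_nf
        rw [e1, e2]; ring
      rw [Finset.sum_congr rfl fun x _ => step x]
      rw [Finset.sum_add_distrib, Finset.sum_add_distrib, ← Finset.mul_sum, ← Finset.mul_sum]
      have gen : ∀ (c' : ZMod N) (z : ℤ), (z = -1 ∨ z = 0 ∨ z = 1) → (c' = c + z • a) →
          ∑ x : ZMod N, e (c' * x) * ∏ ξ ∈ Λ, (1 + u ξ * e (ξ * x) + v ξ * e (-ξ * x)) = 0 := by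
        intro c' z hz hc'
        refine ih c' ?_
        intro ε hε hsum
        refine hc (Function.update ε a z) ?_ ?_
        · intro s hs
          rcases Finset.mem_insert.mp hs with rfl | hs'
          · simpa using hz
          · have hne : s ≠ a := fun h => ha (h ▸ hs')
            simpa [Function.update_of_ne hne] using hε s hs'
        · rw [Finset.sum_insert ha]
          have : ∑ s ∈ Λ, (Function.update ε a z) s • s = ∑ s ∈ Λ, ε s • s := by
            refine Finset.sum_congr rfl fun s hs => ?_
            have hne : s ≠ a := fun h => ha (h ▸ hs)
            rw [Function.update_of_ne hne]
          rw [this, Function.update_self]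
          rw [hc'] at hsum
          rw [← add_assoc]
          exact hsum
      rw [gen c 0 (by norm_num) (by simp), gen (c + a) 1 (by norm_num) (by simp),
        gen (c - a) (-1) (by norm_num) (by simp [sub_eq_add_neg]), mul_zero, mul_zero]
      simp

/-- The Riesz product has total sum `N` when `Λ` is dissociated. -/
lemma keyN (u v : ZMod N → ℂ) :
    ∀ (Λ : Finset (ZMod N)), IsDissociated Λ →
    ∑ x : ZMod N, ∏ ξ ∈ Λ, (1 + u ξ * e (ξ * x) + v ξ * e (-ξ * x)) = (N : ℂ) := by
  intro Λ
  induction Λ using Finset.induction_on with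
  | empty => intro _; simp
  | @insert a Λ ha ih =>
      intro hdiss
      have step : ∀ x : ZMod N,
          ∏ ξ ∈ insert a Λ, (1 + u ξ * e (ξ * x) + v ξ * e (-ξ * x))
          = ∏ ξ ∈ Λ, (1 + u ξ * e (ξ * x) + v ξ * e (-ξ * x))
            + u a * (e (a * x) * ∏ ξ ∈ Λ, (1 + u ξ * e (ξ * x) + v ξ * e (-ξ * x)))
            + v a * (e (-a * x) * ∏ ξ ∈ Λ, (1 + u ξ * e (ξ * x) + v ξ * e (-ξ * x))) := by
        intro x
        rw [Finset.prod_insert ha]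
        ring
      rw [Finset.sum_congr rfl fun x _ => step x]
      rw [Finset.sum_add_distrib, Finset.sum_add_distrib, ← Finset.mul_sum, ← Finset.mul_sum]
      have sub : IsDissociated Λ := isDissociated_subset (Finset.subset_insert a Λ) hdiss
      rw [ih sub]
      have side : ∀ (c : ZMod N) (z : ℤ), (z = -1 ∨ z = 0 ∨ z = 1) → z ≠ 0 → (c = z • a) →
          ∑ x : ZMod N, e (c * x) * ∏ ξ ∈ Λ, (1 + u ξ * e (ξ * x) + v ξ * e (-ξ * x)) = 0 := by
        intro c z hz hz0 hc
        refine key0 u v Λ c ?_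
        intro ε hε hsum
        have happ := hdiss (Function.update ε a z) ?_ ?_ a (Finset.mem_insert_self a Λ)
        · rw [Function.update_self] at happ; exact hz0 happ
        · intro s hs
          rcases Finset.mem_insert.mp hs with rfl | hs'
          · simpa using hz
          · have hne : s ≠ a := fun h => ha (h ▸ hs')
            simpa [Function.update_of_ne hne] using hε s hs'
        · rw [Finset.sum_insert ha]
          have : ∑ s ∈ Λ, (Function.update ε a z) s • s = ∑ s ∈ Λ, ε s • s := by
            refine Finset.sum_congr rfl fun s hs => ?_
            have hne : s ≠ a := fun h => ha (h ▸ hs)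
            rw [Function.update_of_ne hne]
          rw [this, Function.update_self, ← hc]
          exact hsum
      rw [side a 1 (by norm_num) (by norm_num) (by simp), side (-a) (-1) (by norm_num)
        (by norm_num) (by simp)]
      simp


/-- Polynomial lower bound for the entropy-type function. -/
lemma g_lower {δ : ℝ} (hδ : 0 < δ) (hδ1 : δ ≤ 1) :
    δ^2/3 ≤ (1+δ)/2 * Real.log (1+δ/2) + (1-δ)/2 * Real.log (1-δ/2) := by
  set t : ℝ := δ/2 with ht
  have ht0 : 0 < t := by positivity
  have ht2 : t ≤ 1/2 := by rw [ht]; linarith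
  have habs : |t| < 1 := by rw [abs_of_pos ht0]; linarith
  have habs' : |(-t)| < 1 := by rw [abs_neg]; exact habs
  have key1 := Real.abs_log_sub_add_sum_range_le habs 4
  have key2 := Real.abs_log_sub_add_sum_range_le habs' 4
  have hsum1 : (∑ i ∈ Finset.range 4, t ^ (i + 1) / (i + 1)) = t + t^2/2 + t^3/3 + t^4/4 := by
    rw [Finset.sum_range_succ, Finset.sum_range_succ, Finset.sum_range_succ,
      Finset.sum_range_succ, Finset.sum_range_zero]
    norm_num
  have hsum2 : (∑ i ∈ Finset.range 4, (-t) ^ (i + 1) / (i + 1))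
      = -t + t^2/2 - t^3/3 + t^4/4 := by
    rw [Finset.sum_range_succ, Finset.sum_range_succ, Finset.sum_range_succ,
      Finset.sum_range_succ, Finset.sum_range_zero]
    ring
  rw [hsum1] at key1
  rw [hsum2] at key2
  rw [abs_of_pos ht0] at key1
  rw [abs_neg, abs_of_pos ht0] at key2
  have herr : t^(4+1)/(1-t) ≤ 2*t^5 := by
    rw [div_le_iff₀ (by linarith)]
    have h5 : (0:ℝ) ≤ t^5 := by positivity
    have h6 : (0:ℝ) ≤ t^5 * (1 - 2*t) := mul_nonneg h5 (by linarith)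
    have he5 : t^(4+1) = t^5 := by ring
    nlinarith [h6, he5]
  have hlog2 : Real.log (1 - t) ≥ -(t + t^2/2 + t^3/3 + t^4/4) - 2*t^5 := by
    have := (abs_le.mp key1).1
    linarith
  have hlog1 : Real.log (1 + t) ≥ t - t^2/2 + t^3/3 - t^4/4 - 2*t^5 := by
    have := (abs_le.mp key2).1
    have hrw : (1 : ℝ) - -t = 1 + t := by ring
    rw [hrw] at this
    linarith
  have hc1 : (0:ℝ) ≤ (1+δ)/2 := by linarith
  have hc2 : (0:ℝ) ≤ (1-δ)/2 := by linarith
  have b1 : (1+δ)/2 * (t - t^2/2 + t^3/3 - t^4/4 - 2*t^5) ≤ (1+δ)/2 * Real.log (1+t) :=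
    mul_le_mul_of_nonneg_left hlog1 hc1
  have b2 : (1-δ)/2 * (-(t + t^2/2 + t^3/3 + t^4/4) - 2*t^5) ≤ (1-δ)/2 * Real.log (1-t) :=
    mul_le_mul_of_nonneg_left hlog2 hc2
  have hpoly : δ^2/3 ≤ (1+δ)/2 * (t - t^2/2 + t^3/3 - t^4/4 - 2*t^5)
      + (1-δ)/2 * (-(t + t^2/2 + t^3/3 + t^4/4) - 2*t^5) := by
    rw [ht]
    nlinarith [pow_le_pow_left₀ hδ.le hδ1 4, pow_le_pow_left₀ hδ.le hδ1 2,
      sq_nonneg δ, pow_pos hδ 5, pow_le_pow_of_le_one hδ.le hδ1 (by norm_num : 4 ≤ 5),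
      pow_le_pow_of_le_one hδ.le hδ1 (by norm_num : 2 ≤ 4)]
  linarith

set_option maxHeartbeats 1000000 in
/-- The Riesz-product (Chang) bound for a dissociated subset of the large spectrum. -/
lemma riesz_bound {A : Finset (ZMod N)} (hA : A.Nonempty) {δ : ℝ} (hδ : 0 < δ) (hδ1 : δ ≤ 1)
    {Λ : Finset (ZMod N)} (hΛ : ∀ ξ ∈ Λ, δ * A.card ≤ ‖S A ξ‖)
    (hdiss : IsDissociated Λ) :
    (Λ.card : ℝ) * (δ^2/3) ≤ Real.log ((N : ℝ) / A.card) := by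
  classical
  have hcard0 : (0:ℝ) < A.card := by exact_mod_cast Finset.card_pos.mpr hA
  set t : ℝ := δ/2 with htdef
  have ht0 : 0 < t := by positivity
  have ht2 : t ≤ 1/2 := by rw [htdef]; linarith
  -- the rotation factors
  set θ : ZMod N → ℂ := fun ξ => (starRingEnd ℂ) (S A ξ) / (‖S A ξ‖ : ℂ) with hθdef
  have hSne : ∀ ξ ∈ Λ, S A ξ ≠ 0 := by
    intro ξ hξ h0
    have := hΛ ξ hξ
    rw [h0] at this
    simp at this
    nlinarith
  have hθS : ∀ ξ ∈ Λ, θ ξ * S A ξ = (‖S A ξ‖ : ℂ) := by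
    intro ξ hξ
    have hne := hSne ξ hξ
    have habs0 : ((‖S A ξ‖ : ℝ) : ℂ) ≠ 0 :=
      Complex.ofReal_ne_zero.mpr (norm_ne_zero_iff.mpr hne)
    field_simp [hθdef]
    simp only [hθdef]
    rw [div_mul_eq_mul_div, div_eq_iff habs0, mul_comm, Complex.mul_conj, Complex.normSq_eq_norm_sq]
    push_cast
    ring
  have hθabs : ∀ ξ ∈ Λ, ‖θ ξ‖ = 1 := by
    intro ξ hξ
    have hne := hSne ξ hξ
    rw [hθdef]
    simp only [norm_div, Complex.norm_conj, Complex.norm_real, Real.norm_eq_abs]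
    rw [abs_of_nonneg (norm_nonneg _), div_self (norm_ne_zero_iff.mpr hne)]
  -- the real weights
  set w : ZMod N → ZMod N → ℝ := fun ξ x => (θ ξ * e (ξ * x)).re with hwdef
  have hwle : ∀ ξ ∈ Λ, ∀ x : ZMod N, |w ξ x| ≤ 1 := by
    intro ξ hξ x
    have h1 : |w ξ x| ≤ ‖θ ξ‖ * ‖e (ξ * x)‖ := by
      simp only [hwdef]
      exact (Complex.abs_re_le_norm _).trans (le_of_eq (norm_mul _ _))
    rw [hθabs ξ hξ, abs_e, mul_one] at h1
    exact h1
  -- the Riesz product factors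
  set f : ZMod N → ZMod N → ℝ := fun ξ x => 1 + t * w ξ x with hfdef
  have hfpos : ∀ ξ ∈ Λ, ∀ x : ZMod N, 0 < f ξ x := by
    intro ξ hξ x
    have := hwle ξ hξ x
    have h1 : -1 ≤ w ξ x := by cases abs_le.mp this; linarith
    have h2 : t * (-1) ≤ t * w ξ x := by
      apply mul_le_mul_of_nonneg_left h1 ht0.le
    simp only [hfdef]
    nlinarith
  -- Step A : total sum is N
  have stepA : ∑ x : ZMod N, ∏ ξ ∈ Λ, f ξ x = (N : ℝ) := by
    have cast_eq : ∀ x : ZMod N, ((∏ ξ ∈ Λ, f ξ x : ℝ) : ℂ)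
        = ∏ ξ ∈ Λ, (1 + ((t/2 : ℝ) : ℂ) * θ ξ * e (ξ * x)
            + ((t/2 : ℝ) : ℂ) * (starRingEnd ℂ) (θ ξ) * e (-ξ * x)) := by
      intro x
      simp only [hfdef]
      push_cast
      refine Finset.prod_congr rfl fun ξ hξ => ?_
      have hconj : (starRingEnd ℂ) (θ ξ * e (ξ * x)) = (starRingEnd ℂ) (θ ξ) * e (-ξ * x) := by
        rw [map_mul, conj_e]
        ring_nf
      have hre : ((w ξ x : ℝ) : ℂ)
          = (θ ξ * e (ξ * x) + (starRingEnd ℂ) (θ ξ) * e (-ξ * x)) / 2 := by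
        rw [← hconj, Complex.add_conj]
        simp only [hwdef]
        push_cast
        ring
      rw [hre]
      push_cast
      ring
    have hkey := keyN (fun ξ => ((t/2 : ℝ) : ℂ) * θ ξ)
      (fun ξ => ((t/2 : ℝ) : ℂ) * (starRingEnd ℂ) (θ ξ)) Λ hdiss
    have : ((∑ x : ZMod N, ∏ ξ ∈ Λ, f ξ x : ℝ) : ℂ) = ((N : ℝ) : ℂ) := by
      push_cast only [Complex.ofReal_sum]
      rw [Finset.sum_congr rfl fun x _ => cast_eq x]
      rw [show ((N:ℝ):ℂ) = (N:ℂ) from by norm_cast, ← hkey]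
    exact_mod_cast this
  -- Step B : restrict to A
  have hfnonneg : ∀ x : ZMod N, 0 ≤ ∏ ξ ∈ Λ, f ξ x := by
    intro x
    exact Finset.prod_nonneg fun ξ hξ => (hfpos ξ hξ x).le
  have stepB : ∑ x ∈ A, ∏ ξ ∈ Λ, f ξ x ≤ (N : ℝ) := by
    rw [← stepA]
    exact Finset.sum_le_sum_of_subset_of_nonneg (Finset.subset_univ A)
      (fun x _ _ => hfnonneg x)
  -- the exponent functions
  set φ : ZMod N → ZMod N → ℝ := fun ξ x =>
    (1 + w ξ x)/2 * Real.log (1+t) + (1 - w ξ x)/2 * Real.log (1-t) with hφdef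
  have h1t : (0:ℝ) < 1 + t := by linarith
  have h2t : (0:ℝ) < 1 - t := by linarith
  -- Step C : pointwise lower bound by exponentials
  have stepC : ∀ x : ZMod N, Real.exp (∑ ξ ∈ Λ, φ ξ x) ≤ ∏ ξ ∈ Λ, f ξ x := by
    intro x
    rw [Real.exp_sum]
    refine Finset.prod_le_prod (fun ξ _ => (Real.exp_pos _).le) fun ξ hξ => ?_
    have hw1 : (0:ℝ) ≤ (1 + w ξ x)/2 := by
      have := (abs_le.mp (hwle ξ hξ x)).1; linarith
    have hw2 : (0:ℝ) ≤ (1 - w ξ x)/2 := by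
      have := (abs_le.mp (hwle ξ hξ x)).2; linarith
    have hexp : Real.exp (φ ξ x)
        = (1+t) ^ ((1 + w ξ x)/2) * (1-t) ^ ((1 - w ξ x)/2) := by
      simp only [hφdef]
      rw [Real.exp_add, Real.rpow_def_of_pos h1t, Real.rpow_def_of_pos h2t,
        mul_comm (Real.log (1+t)), mul_comm (Real.log (1-t))]
    rw [hexp]
    have hAM := Real.geom_mean_le_arith_mean2_weighted hw1 hw2 h1t.le h2t.le
      (by ring : (1 + w ξ x)/2 + (1 - w ξ x)/2 = 1)
    calc (1+t) ^ ((1 + w ξ x)/2) * (1-t) ^ ((1 - w ξ x)/2)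
        ≤ (1 + w ξ x)/2 * (1+t) + (1 - w ξ x)/2 * (1-t) := hAM
      _ = f ξ x := by simp only [hfdef]; ring
  -- Step D : Jensen
  set ℓ : ZMod N → ℝ := fun x => ∑ ξ ∈ Λ, φ ξ x with hℓdef
  have stepD : (A.card : ℝ) * Real.exp ((∑ x ∈ A, ℓ x) * (A.card : ℝ)⁻¹)
      ≤ ∑ x ∈ A, Real.exp (ℓ x) := by
    have hjensen := Real.geom_mean_le_arith_mean_weighted A (fun _ => (A.card : ℝ)⁻¹)
      (fun x => Real.exp (ℓ x)) (fun _ _ => by positivity)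
      (by rw [Finset.sum_const, nsmul_eq_mul]; exact mul_inv_cancel₀ (ne_of_gt hcard0))
      (fun _ _ => (Real.exp_pos _).le)
    have hL : ∏ x ∈ A, (Real.exp (ℓ x)) ^ ((A.card : ℝ)⁻¹)
        = Real.exp ((∑ x ∈ A, ℓ x) * (A.card : ℝ)⁻¹) := by
      rw [Finset.sum_mul, Real.exp_sum]
      refine Finset.prod_congr rfl fun x _ => ?_
      rw [Real.rpow_def_of_pos (Real.exp_pos _), Real.log_exp]
    rw [hL] at hjensen
    have hR : ∑ x ∈ A, (fun _ => (A.card : ℝ)⁻¹) x * (fun x => Real.exp (ℓ x)) x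
        = (A.card : ℝ)⁻¹ * ∑ x ∈ A, Real.exp (ℓ x) := by
      rw [Finset.mul_sum]
    rw [hR] at hjensen
    calc (A.card : ℝ) * Real.exp ((∑ x ∈ A, ℓ x) * (A.card : ℝ)⁻¹)
        ≤ (A.card : ℝ) * ((A.card : ℝ)⁻¹ * ∑ x ∈ A, Real.exp (ℓ x)) :=
          mul_le_mul_of_nonneg_left hjensen hcard0.le
      _ = ∑ x ∈ A, Real.exp (ℓ x) := by
          rw [← mul_assoc, mul_inv_cancel₀ (ne_of_gt hcard0), one_mul]
  -- Step E : lower bound the average exponent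
  set g : ℝ := (1+δ)/2 * Real.log (1+t) + (1-δ)/2 * Real.log (1-t) with hgdef
  have stepE : (A.card : ℝ) * ((Λ.card : ℝ) * g) ≤ ∑ x ∈ A, ℓ x := by
    have hswap : ∑ x ∈ A, ℓ x = ∑ ξ ∈ Λ, ∑ x ∈ A, φ ξ x := by
      simp only [hℓdef]
      exact Finset.sum_comm
    rw [hswap]
    have hper : ∀ ξ ∈ Λ, (A.card : ℝ) * g ≤ ∑ x ∈ A, φ ξ x := by
      intro ξ hξ
      have hW : ∑ x ∈ A, w ξ x = ‖S A ξ‖ := by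
        simp only [hwdef]
        have : ∑ x ∈ A, (θ ξ * e (ξ * x)).re = (∑ x ∈ A, θ ξ * e (ξ * x)).re := by
          rw [Complex.re_sum]
        rw [this, ← Finset.mul_sum, ← S, hθS ξ hξ]
        rw [Complex.ofReal_re]
      have hsumφ : ∑ x ∈ A, φ ξ x
          = (A.card : ℝ) * ((Real.log (1+t) + Real.log (1-t))/2)
            + (Real.log (1+t) - Real.log (1-t))/2 * ‖S A ξ‖ := by
        have hterm : ∀ x : ZMod N, φ ξ x = (Real.log (1+t) + Real.log (1-t))/2
            + (Real.log (1+t) - Real.log (1-t))/2 * w ξ x := by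
          intro x; simp only [hφdef]; ring
        rw [Finset.sum_congr rfl fun x _ => hterm x, Finset.sum_add_distrib,
          Finset.sum_const, ← Finset.mul_sum, hW, nsmul_eq_mul]
      rw [hsumφ]
      have hlogle : Real.log (1-t) ≤ Real.log (1+t) :=
        Real.log_le_log h2t (by linarith)
      have hSlb := hΛ ξ hξ
      have hgexp : g = (Real.log (1+t) + Real.log (1-t))/2
          + (Real.log (1+t) - Real.log (1-t))/2 * δ := by
        simp only [hgdef]; ring
      rw [hgexp]
      have hfact : 0 ≤ (Real.log (1+t) - Real.log (1-t))/2
          * (‖S A ξ‖ - δ * A.card) := by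
        apply mul_nonneg
        · linarith
        · linarith
      ring_nf
      ring_nf at hfact
      nlinarith
    calc (A.card : ℝ) * ((Λ.card : ℝ) * g) = ∑ _ξ ∈ Λ, (A.card : ℝ) * g := by
          rw [Finset.sum_const, nsmul_eq_mul]; ring
      _ ≤ ∑ ξ ∈ Λ, ∑ x ∈ A, φ ξ x := Finset.sum_le_sum hper
  -- Step F : combine
  have hNpos : (0:ℝ) < N := by
    have := NeZero.pos N
    exact_mod_cast this
  have hchain : (A.card : ℝ) * Real.exp ((Λ.card : ℝ) * g) ≤ (N : ℝ) := by
    have h1 : ((Λ.card : ℝ) * g) ≤ (∑ x ∈ A, ℓ x) * (A.card : ℝ)⁻¹ := by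
      rw [← div_eq_mul_inv]
      exact (le_div_iff₀' hcard0).mpr stepE
    calc (A.card : ℝ) * Real.exp ((Λ.card : ℝ) * g)
        ≤ (A.card : ℝ) * Real.exp ((∑ x ∈ A, ℓ x) * (A.card : ℝ)⁻¹) :=
          mul_le_mul_of_nonneg_left (Real.exp_le_exp.mpr h1) hcard0.le
      _ ≤ ∑ x ∈ A, Real.exp (ℓ x) := stepD
      _ ≤ ∑ x ∈ A, ∏ ξ ∈ Λ, f ξ x := Finset.sum_le_sum fun x _ => stepC x
      _ ≤ (N : ℝ) := stepB
  have hlogineq : (Λ.card : ℝ) * g ≤ Real.log ((N : ℝ) / A.card) := by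
    rw [Real.le_log_iff_exp_le (by positivity)]
    rw [le_div_iff₀ hcard0]
    linarith [hchain]
  have hglb : δ^2/3 ≤ g := by
    simp only [hgdef, htdef]
    exact g_lower hδ hδ1
  calc (Λ.card : ℝ) * (δ^2/3) ≤ (Λ.card : ℝ) * g :=
        mul_le_mul_of_nonneg_left hglb (Nat.cast_nonneg _)
    _ ≤ Real.log ((N : ℝ) / A.card) := hlogineq



lemma spec_abs_S {A : Finset (ZMod N)} {δ : ℝ} {ξ : ZMod N} (hξ : ξ ∈ largeSpec A δ) :
    δ * A.card ≤ ‖S A ξ‖ := by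
  have hNpos : (0:ℝ) < N := by exact_mod_cast NeZero.pos N
  have h := (Finset.mem_filter.mp hξ).2
  rw [abs_indFourierCoeff] at h
  have := mul_le_mul_of_nonneg_left h hNpos.le
  calc δ * A.card = (N:ℝ) * (δ * ((A.card : ℝ)/N)) := by field_simp
    _ ≤ (N:ℝ) * ((N:ℝ)⁻¹ * ‖S A ξ‖) := this
    _ = ‖S A ξ‖ := by field_simp

lemma abs_S_le (A : Finset (ZMod N)) (ξ : ZMod N) :
    ‖S A ξ‖ ≤ A.card := by
  calc ‖S A ξ‖ ≤ ∑ x ∈ A, ‖e (ξ * x)‖ := norm_sum_le _ _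
    _ = A.card := by
        rw [Finset.sum_congr rfl fun x _ => abs_e (ξ * x), Finset.sum_const, nsmul_eq_mul,
          mul_one]

lemma delta_le_one {A : Finset (ZMod N)} {δ : ℝ} {ξ : ZMod N} (hA : A.Nonempty)
    (hξ : ξ ∈ largeSpec A δ) : δ ≤ 1 := by
  have hcard0 : (0:ℝ) < A.card := by exact_mod_cast Finset.card_pos.mpr hA
  have h1 := (spec_abs_S hξ).trans (abs_S_le A ξ)
  nlinarith

lemma parseval_bound {A : Finset (ZMod N)} (hA : A.Nonempty) {δ : ℝ} (hδ : 0 < δ)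
    {Λ : Finset (ZMod N)} (hΛ : Λ ⊆ largeSpec A δ) (hdiss : IsDissociated Λ) :
    (Λ.card : ℝ) * (δ * A.card)^2 ≤ (N : ℝ) * A.card - (A.card:ℝ)^2 := by
  have hcard0 : (0:ℝ) < A.card := by exact_mod_cast Finset.card_pos.mpr hA
  have h0 : (0:ZMod N) ∉ Λ := zero_not_mem_dissociated hdiss
  have hsub : Λ ⊆ Finset.univ.erase (0 : ZMod N) := by
    intro ξ hξ
    exact Finset.mem_erase.mpr ⟨fun h => h0 (h ▸ hξ), Finset.mem_univ ξ⟩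
  have hlow : (Λ.card : ℝ) * (δ * A.card)^2 ≤ ∑ ξ ∈ Λ, Complex.normSq (S A ξ) := by
    have h := Finset.card_nsmul_le_sum Λ (fun ξ => Complex.normSq (S A ξ)) ((δ * A.card)^2)
      (fun ξ hξ => by
        show (δ * (A.card:ℝ))^2 ≤ Complex.normSq (S A ξ)
        rw [← Complex.sq_norm]
        exact pow_le_pow_left₀ (by positivity) (spec_abs_S (hΛ hξ)) 2)
    rwa [nsmul_eq_mul] at h
  have hup : ∑ ξ ∈ Λ, Complex.normSq (S A ξ) ≤ (N : ℝ) * A.card - (A.card:ℝ)^2 := by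
    have h1 : ∑ ξ ∈ Λ, Complex.normSq (S A ξ)
        ≤ ∑ ξ ∈ Finset.univ.erase (0 : ZMod N), Complex.normSq (S A ξ) :=
      Finset.sum_le_sum_of_subset_of_nonneg hsub fun ξ _ _ => Complex.normSq_nonneg _
    have h2 : ∑ ξ ∈ Finset.univ.erase (0 : ZMod N), Complex.normSq (S A ξ)
        = (∑ ξ : ZMod N, Complex.normSq (S A ξ)) - Complex.normSq (S A 0) := by
      rw [← Finset.sum_erase_add Finset.univ _ (Finset.mem_univ (0 : ZMod N))]
      ring
    have h3 : Complex.normSq (S A 0) = (A.card:ℝ)^2 := by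
      rw [S_zero]
      rw [Complex.normSq_natCast]
      ring
    rw [h2, h3, parseval] at h1
    exact h1
  linarith


lemma rpow_pow_bridge {b : ℝ} (hb : 0 ≤ b) (k : ℕ) :
    (b ^ (((k:ℝ))/100)) ^ (100:ℕ) = b ^ k := by
  rw [← Real.rpow_natCast (b ^ (((k:ℝ))/100)) 100, ← Real.rpow_mul hb,
    show ((k:ℝ))/100 * ((100:ℕ):ℝ) = ((k:ℕ):ℝ) by push_cast; ring, Real.rpow_natCast]

lemma numN1 : (1:ℝ) ≤ 2.73 * (Real.log 2) ^ (2.73:ℝ) := by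
  have h0 : (0.6931:ℝ) ≤ Real.log 2 := by
    have := Real.log_two_gt_d9
    norm_num at this ⊢
    linarith
  have h1 : (0.6931:ℝ) ^ (2.73:ℝ) ≤ (Real.log 2) ^ (2.73:ℝ) :=
    Real.rpow_le_rpow (by norm_num) h0 (by norm_num)
  have h2 : ((1:ℝ)/2.73) ≤ (0.6931:ℝ) ^ (2.73:ℝ) := by
    have hb : ((0.6931:ℝ) ^ (2.73:ℝ)) ^ (100:ℕ) = (0.6931:ℝ) ^ (273:ℕ) := by
      have := rpow_pow_bridge (by norm_num : (0:ℝ) ≤ 0.6931) 273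
      rw [show (((273:ℕ):ℝ))/100 = (2.73:ℝ) by norm_num] at this
      exact this
    have hcomp : ((1:ℝ)/2.73) ^ (100:ℕ) ≤ ((0.6931:ℝ) ^ (2.73:ℝ)) ^ (100:ℕ) := by
      rw [hb, show (273:ℕ) = 91*3 from rfl, pow_mul]; norm_num
    exact le_of_pow_le_pow_left₀ (by norm_num) (by positivity) hcomp
  nlinarith [h1, h2]

lemma numN2 : ((11:ℝ)/10) ≤ ((27:ℝ)/25) ^ (1.73:ℝ) := by
  have hb : (((27:ℝ)/25) ^ (1.73:ℝ)) ^ (100:ℕ) = ((27:ℝ)/25) ^ (173:ℕ) := by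
    have := rpow_pow_bridge (by norm_num : (0:ℝ) ≤ (27:ℝ)/25) 173
    rw [show (((173:ℕ):ℝ))/100 = (1.73:ℝ) by norm_num] at this
    exact this
  have hcomp : ((11:ℝ)/10) ^ (100:ℕ) ≤ (((27:ℝ)/25) ^ (1.73:ℝ)) ^ (100:ℕ) := by
    rw [hb]; norm_num
  exact le_of_pow_le_pow_left₀ (by norm_num) (by positivity) hcomp

set_option maxHeartbeats 1000000 in
/-- Main bound for a single dissociated subset of the spectrum. -/
lemma dissociated_card_bound {A : Finset (ZMod N)} (hA : A.Nonempty)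
    (hhalf : (A.card : ℝ) / N ≤ 1/2) {δ : ℝ} (hδ : 0 < δ)
    {Λ : Finset (ZMod N)} (hΛ : Λ ⊆ largeSpec A δ) (hdiss : IsDissociated Λ) :
    (Λ.card : ℝ) ≤ 2.73 * (Real.log ((N:ℝ) / A.card)) ^ (2.73:ℝ) / δ^2 := by
  have hNpos : (0:ℝ) < N := by exact_mod_cast NeZero.pos N
  have hcard0 : (0:ℝ) < A.card := by exact_mod_cast Finset.card_pos.mpr hA
  have hratio2 : (2:ℝ) ≤ (N:ℝ)/A.card := by
    rw [le_div_iff₀ hcard0]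
    have h2 := (div_le_div_iff₀ hNpos (by norm_num : (0:ℝ) < 2)).mp hhalf
    linarith
  set L := Real.log ((N:ℝ)/A.card) with hL
  have hL2 : Real.log 2 ≤ L := Real.log_le_log (by norm_num) hratio2
  have hLpos : 0 < L := lt_of_lt_of_le (Real.log_pos (by norm_num)) hL2
  rcases Λ.eq_empty_or_nonempty with rfl | hne
  · simp only [Finset.card_empty, Nat.cast_zero]
    positivity
  obtain ⟨ξ0, hξ0⟩ := hne
  have hδ1 : δ ≤ 1 := delta_le_one hA (hΛ hξ0)
  rw [le_div_iff₀ (by positivity : (0:ℝ) < δ^2)]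
  have hries : (Λ.card:ℝ) * δ^2 ≤ 3 * L := by
    have := riesz_bound hA hδ hδ1 (fun ξ hξ => spec_abs_S (hΛ hξ)) hdiss
    rw [← hL] at this
    linarith
  have hpars : (Λ.card:ℝ) * δ^2 ≤ (N:ℝ)/A.card - 1 := by
    have h := parseval_bound hA hδ hΛ hdiss
    have hc2 : (0:ℝ) < (A.card:ℝ)^2 := by positivity
    have hstep : (Λ.card:ℝ) * δ^2 * (A.card:ℝ)^2 ≤ ((N:ℝ)/A.card - 1) * (A.card:ℝ)^2 := by
      calc (Λ.card:ℝ) * δ^2 * (A.card:ℝ)^2 = (Λ.card:ℝ)*(δ*A.card)^2 := by ring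
        _ ≤ (N:ℝ)*A.card - (A.card:ℝ)^2 := h
        _ = ((N:ℝ)/A.card - 1) * (A.card:ℝ)^2 := by field_simp
    exact le_of_mul_le_mul_right hstep hc2
  by_cases hcase : L ≤ 27/25
  · -- Parseval branch (α close to 1/2)
    set a := Real.log 2 with ha
    set x := L - a with hx
    have haU : a ≤ 0.6931471808 := le_of_lt Real.log_two_lt_d9
    have haL : (0.6931471803:ℝ) ≤ a := le_of_lt Real.log_two_gt_d9
    have hx0 : 0 ≤ x := by rw [hx]; linarith
    have hxu : x ≤ 0.3869 := by rw [hx]; linarith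
    have hexpL : (N:ℝ)/A.card = 2 * Real.exp x := by
      have h1 : (N:ℝ)/A.card = Real.exp L := (Real.exp_log (by positivity)).symm
      rw [h1, show L = a + x by rw [hx]; ring, Real.exp_add, ha,
        Real.exp_log (by norm_num : (0:ℝ) < 2)]
    have hexpx : Real.exp x ≤ 1/(1-x) := by
      have h1 : 1 - x ≤ Real.exp (-x) := by linarith [Real.add_one_le_exp (-x)]
      have h2 : (1-x) * Real.exp x ≤ Real.exp (-x) * Real.exp x :=
        mul_le_mul_of_nonneg_right h1 (Real.exp_pos x).le
      rw [← Real.exp_add, neg_add_cancel, Real.exp_zero] at h2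
      rw [le_div_iff₀ (by linarith : (0:ℝ) < 1 - x)]
      linarith
    have hmain1 : (Λ.card:ℝ)*δ^2 ≤ (1+x)/(1-x) := by
      have hxx : (N:ℝ)/A.card - 1 ≤ 2 * (1/(1-x)) - 1 := by
        rw [hexpL]
        nlinarith [hexpx]
      calc (Λ.card:ℝ)*δ^2 ≤ (N:ℝ)/A.card - 1 := hpars
        _ ≤ 2*(1/(1-x)) - 1 := hxx
        _ = (1+x)/(1-x) := by
            have halg : ∀ y : ℝ, y < 1 → 2*(1/(1-y)) - 1 = (1+y)/(1-y) := by
              intro y hy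
              have hne : (1:ℝ) - y ≠ 0 := by linarith
              field_simp
              ring
            exact halg x (by linarith)
    have hapos : (0:ℝ) < a := by linarith
    have hsplit : L ^ (2.73:ℝ) = a ^ (2.73:ℝ) * (1 + x/a) ^ (2.73:ℝ) := by
      rw [← Real.mul_rpow hapos.le (by positivity)]
      congr 1
      field_simp
      rw [hx]
      ring
    have hbern : 1 + 2.73 * (x/a) ≤ (1 + x/a) ^ (2.73:ℝ) :=
      one_add_mul_self_le_rpow_one_add
        (by have := div_nonneg hx0 hapos.le; linarith) (by norm_num)
    have hP : 1 ≤ 2.73 * a ^ (2.73:ℝ) := numN1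
    have hquot : 3.9 * x ≤ 2.73 * (x/a) := by
      rw [mul_div_assoc'] 
      rw [le_div_iff₀ hapos]
      nlinarith [hx0, haU]
    have hbpos : (0:ℝ) ≤ (1 + x/a) ^ (2.73:ℝ) := Real.rpow_nonneg (by positivity) _
    have hfinal : (1+x)/(1-x) ≤ 2.73 * L ^ (2.73:ℝ) := by
      have hc1 : (1:ℝ) * (1 + x/a) ^ (2.73:ℝ) ≤ (2.73 * a ^ (2.73:ℝ)) * (1 + x/a) ^ (2.73:ℝ) :=
        mul_le_mul_of_nonneg_right hP hbpos
      have hc2 : (1+x)/(1-x) ≤ 1 + 3.9*x := by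
        rw [div_le_iff₀ (by linarith : (0:ℝ) < 1 - x)]
        nlinarith [hx0, hxu]
      calc (1+x)/(1-x) ≤ 1 + 3.9*x := hc2
        _ ≤ 1 + 2.73*(x/a) := by linarith [hquot]
        _ ≤ (1 + x/a) ^ (2.73:ℝ) := hbern
        _ = 1 * (1 + x/a) ^ (2.73:ℝ) := (one_mul _).symm
        _ ≤ (2.73 * a ^ (2.73:ℝ)) * (1 + x/a) ^ (2.73:ℝ) := hc1
        _ = 2.73 * L ^ (2.73:ℝ) := by rw [hsplit]; ring
    linarith [hmain1, hfinal]
  · -- Riesz branch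
    push_neg at hcase
    have hLC : L ^ (2.73:ℝ) = L ^ (1.73:ℝ) * L := by
      rw [show (2.73:ℝ) = 1.73 + 1 by norm_num, Real.rpow_add hLpos, Real.rpow_one]
    have h173 : ((11:ℝ)/10) ≤ L ^ (1.73:ℝ) :=
      le_trans numN2 (Real.rpow_le_rpow (by norm_num) (by linarith [hcase]) (by norm_num))
    have hgrow : 3 * L ≤ 2.73 * L ^ (2.73:ℝ) := by
      rw [hLC]
      nlinarith [mul_le_mul_of_nonneg_right h173 hLpos.le]
    linarith [hries, hgrow]

end ChangAux

/-- Chang's lemma: `dim Spec_δ(A) ≤ C (log(1/α))^C / δ²`. -/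
theorem chang_lemma :
    ∃ C : ℝ, 0 < C ∧ ∀ (N : ℕ) [NeZero N] (A : Finset (ZMod N)) (δ : ℝ),
      A.Nonempty → (A.card : ℝ) / N ≤ 1 / 2 → 0 < δ →
      (addDim (largeSpec A δ) : ℝ) ≤
        C * (Real.log (1 / ((A.card : ℝ) / N))) ^ C / δ ^ 2 := by
  refine ⟨2.73, by norm_num, ?_⟩
  intro N _ A δ hA hhalf hδ
  have hNpos : (0:ℝ) < N := by exact_mod_cast NeZero.pos N
  have hcard0 : (0:ℝ) < A.card := by exact_mod_cast Finset.card_pos.mpr hA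
  have hlogarg : (1 : ℝ) / ((A.card : ℝ) / N) = (N:ℝ)/A.card := one_div_div _ _
  rw [hlogarg]
  have hfilter_ne : ((largeSpec A δ).powerset.filter IsDissociated).Nonempty := by
    refine ⟨∅, Finset.mem_filter.mpr ⟨Finset.empty_mem_powerset _, ?_⟩⟩
    intro ε hε hsum s hs
    exact absurd hs (Finset.notMem_empty s)
  obtain ⟨T, hT, hsup⟩ := Finset.exists_mem_eq_sup _ hfilter_ne Finset.card
  rw [addDim, hsup]
  have hT' := Finset.mem_filter.mp hT
  have hTsub : T ⊆ largeSpec A δ := Finset.mem_powerset.mp hT'.1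
  exact ChangAux.dissociated_card_bound hA hhalf hδ hTsub hT'.2
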